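/- Define E(n) = ∑_{k=0}^{⌊(n-1)/2⌋} k·C(n-1-k, k). Then for every integer n ≥ 4, E(n) + E(n-2) = (n-2)·F_{n-3}. -/

import Mathlib

/-- `E n = ∑_{k=0}^{⌊(n-1)/2⌋} k * C(n-1-k, k)`. -/
def E (n : ℕ) : ℕ := ∑ k ∈ Finset.range ((n - 1) / 2 + 1), k * Nat.choose (n - 1 - k) k

private def e (m : ℕ) : ℕ := ∑ k ∈ Finset.range (m + 1), k * Nat.choose (m - k) k

private lemma E_eq_e (n : ℕ) : E n = e (n - 1) := by
  unfold E e
  apply Finset.sum_subset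
  · intro k hk
    simp only [Finset.mem_range] at *
    omega
  · intro k hk hk2
    simp only [Finset.mem_range] at *
    have h : n - 1 - k < k := by omega
    simp [Nat.choose_eq_zero_of_lt h]

private lemma fib_sum (m : ℕ) :
    ∑ k ∈ Finset.range (m + 1), Nat.choose (m - k) k = Nat.fib (m + 1) := by
  rw [Nat.fib_succ_eq_sum_choose, ← Finset.HasAntidiagonal.map_prodComm_antidiagonal, Finset.sum_map,
    ← Finset.Nat.sum_antidiagonal_eq_sum_range_succ (fun a b => Nat.choose b a)]
  rfl

private lemma e_rec (m : ℕ) : e (m + 2) = e (m + 1) + e m + Nat.fib (m + 1) := by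
  have h1 : e (m + 2) = ∑ j ∈ Finset.range (m + 2), (j + 1) * Nat.choose (m + 1 - j) (j + 1) := by
    unfold e
    rw [Finset.sum_range_succ' (fun k => k * Nat.choose (m + 2 - k) k)]
    simp
  have hlast : (m + 1 + 1) * Nat.choose (m + 1 - (m + 1)) (m + 1 + 1) = 0 := by simp
  rw [h1, Finset.sum_range_succ, hlast, add_zero]
  have h2 : ∀ j ∈ Finset.range (m + 1),
      (j + 1) * Nat.choose (m + 1 - j) (j + 1)
        = (j + 1) * Nat.choose (m - j) j + (j + 1) * Nat.choose (m - j) (j + 1) := by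
    intro j hj
    simp only [Finset.mem_range] at hj
    have : m + 1 - j = (m - j) + 1 := by omega
    rw [this, Nat.choose_succ_succ', Nat.mul_add]
  rw [Finset.sum_congr rfl h2, Finset.sum_add_distrib]
  have h3 : ∑ j ∈ Finset.range (m + 1), (j + 1) * Nat.choose (m - j) j
      = e m + Nat.fib (m + 1) := by
    unfold e
    rw [← fib_sum m, ← Finset.sum_add_distrib]
    apply Finset.sum_congr rfl
    intro j _
    ring
  have h4 : ∑ j ∈ Finset.range (m + 1), (j + 1) * Nat.choose (m - j) (j + 1) = e (m + 1) := by
    unfold e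
    rw [Finset.sum_range_succ' (fun k => k * Nat.choose (m + 1 - k) k)]
    simp
  rw [h3, h4]
  ring

private lemma key : ∀ m : ℕ, e (m + 3) + e (m + 1) = (m + 2) * Nat.fib (m + 2) := by
  intro m
  induction m using Nat.twoStepInduction with
  | zero => decide
  | one => decide
  | more m ih1 ih2 =>
    have r1 : e (m + 5) = e (m + 4) + e (m + 3) + Nat.fib (m + 4) := e_rec (m + 3)
    have r2 : e (m + 3) = e (m + 2) + e (m + 1) + Nat.fib (m + 2) := e_rec (m + 1)
    have ih2' : e (m + 4) + e (m + 2) = (m + 3) * Nat.fib (m + 3) := ih2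
    have hf : Nat.fib (m + 4) = Nat.fib (m + 2) + Nat.fib (m + 3) := Nat.fib_add_two
    show e (m + 5) + e (m + 3) = (m + 4) * Nat.fib (m + 4)
    zify at r1 r2 ih1 ih2' hf ⊢
    linear_combination r1 + r2 + ih1 + ih2' - (m + 3 : ℤ) * hf


/-- Recurrence for `E`: for `n ≥ 4`, `E(n) + E(n-2) = (n-2) * F_{n-3}`,
where `F_{n-3} = fib (n-2)` in the standard convention. -/
theorem E_recurrence (n : ℕ) (hn : 4 ≤ n) :
    E n + E (n - 2) = (n - 2) * Nat.fib (n - 2) := by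
  obtain ⟨m, rfl⟩ : ∃ m, n = m + 4 := ⟨n - 4, by omega⟩
  rw [E_eq_e, E_eq_e]
  have h1 : m + 4 - 1 = m + 3 := by omega
  have h2 : m + 4 - 2 = m + 2 := by omega
  have h3 : m + 4 - 2 - 1 = m + 1 := by omega
  rw [h1, h3, h2]
  exact key m
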